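/- On the region {(α,β) ∈ ℝ² : λ_k < α < λ_{k+1}, α ≤ β}, the function m is locally Lipschitz continuous and strictly decreasing in each variable: if α₁ ≤ α₂, β₁ ≤ β₂ and (α₁,β₁) ≠ (α₂,β₂) then m(α₂,β₂) < m(α₁,β₁). Moreover, for every α with λ_k < α < λ_{k+1} one has m(α,α) = ½(λ_{k+1} − α) > 0. -/

import Mathlib

open MeasureTheory RealInnerProductSpace Filter Topology

section Helpers
variable {α : Type*} [MeasurableSpace α] {μ : Measure α}

lemma l2mul_integrable (f g : Lp ℝ 2 μ) : Integrable (fun x => f x * g x) μ := by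
  have := L2.integrable_inner (𝕜 := ℝ) f g
  simpa [RCLike.inner_apply, mul_comm] using this

lemma l2inner_eq (f g : Lp ℝ 2 μ) : ⟪f, g⟫ = ∫ x, f x * g x ∂μ := by
  rw [L2.inner_def]; simp [RCLike.inner_apply, mul_comm]

lemma l2normsq (f : Lp ℝ 2 μ) : ‖f‖ ^ 2 = ∫ x, f x * f x ∂μ := by
  rw [← real_inner_self_eq_norm_sq, l2inner_eq]

lemma posPart_sub_norm (f h : Lp ℝ 2 μ) :
    ‖Lp.posPart f - Lp.posPart h‖ ≤ ‖f - h‖ := by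
  have := LipschitzWith.norm_compLp_sub_le Lp.lipschitzWith_pos_part (max_eq_right le_rfl) f h
  simpa [MeasureTheory.Lp.posPart] using this

lemma negPart_sub_norm (f h : Lp ℝ 2 μ) :
    ‖Lp.negPart f - Lp.negPart h‖ ≤ ‖f - h‖ := by
  have := posPart_sub_norm (-f) (-h)
  rw [neg_sub_neg] at this
  calc ‖Lp.negPart f - Lp.negPart h‖ = ‖Lp.posPart (-f) - Lp.posPart (-h)‖ := rfl
  _ ≤ ‖h - f‖ := this
  _ = ‖f - h‖ := norm_sub_rev _ _

lemma sq_max_le (x δ : ℝ) : max (x + δ) 0 ^ 2 ≤ (max x 0 + δ) ^ 2 := by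
  rcases le_total (x + δ) 0 with h | h
  · rw [max_eq_right h]
    simpa using sq_nonneg (max x 0 + δ)
  · rw [max_eq_left h]
    rcases le_total x 0 with hx | hx
    · rw [max_eq_right hx]; nlinarith
    · rw [max_eq_left hx]

lemma posneg_sq (f : Lp ℝ 2 μ) :
    ‖Lp.posPart f‖ ^ 2 + ‖Lp.negPart f‖ ^ 2 = ‖f‖ ^ 2 := by
  rw [l2normsq, l2normsq, l2normsq,
    ← integral_add (l2mul_integrable _ _) (l2mul_integrable _ _)]
  refine integral_congr_ae ?_
  filter_upwards [Lp.coeFn_posPart f, Lp.coeFn_negPart_eq_max f] with x h1 h2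
  simp only [h1, h2]
  rcases le_total (f x) 0 with h | h
  · rw [max_eq_right h, max_eq_left (by linarith)]; ring
  · rw [max_eq_left h, max_eq_right (by linarith)]; ring

lemma pos_sub_neg (g f : Lp ℝ 2 μ) :
    ⟪g, Lp.posPart f⟫ - ⟪g, Lp.negPart f⟫ = ⟪g, f⟫ := by
  rw [l2inner_eq, l2inner_eq, l2inner_eq,
    ← integral_sub (l2mul_integrable _ _) (l2mul_integrable _ _)]
  refine integral_congr_ae ?_
  filter_upwards [Lp.coeFn_posPart f, Lp.coeFn_negPart_eq_max f] with x h1 h2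
  simp only [h1, h2]
  rcases le_total (f x) 0 with h | h
  · rw [max_eq_right h, max_eq_left (by linarith)]; ring
  · rw [max_eq_left h, max_eq_right (by linarith)]; ring

lemma inner_posPart_nonneg (g f : Lp ℝ 2 μ) (hg : ∀ᵐ x ∂μ, 0 ≤ g x) :
    0 ≤ ⟪g, Lp.posPart f⟫ := by
  rw [l2inner_eq]
  apply integral_nonneg_of_ae
  filter_upwards [hg, Lp.coeFn_posPart f] with x h1 h2
  rw [h2]; exact mul_nonneg h1 (le_max_right _ _)

lemma inner_negPart_nonneg (g f : Lp ℝ 2 μ) (hg : ∀ᵐ x ∂μ, 0 ≤ g x) :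
    0 ≤ ⟪g, Lp.negPart f⟫ := by
  rw [l2inner_eq]
  apply integral_nonneg_of_ae
  filter_upwards [hg, Lp.coeFn_negPart_eq_max f] with x h1 h2
  rw [h2]; exact mul_nonneg h1 (le_max_right _ _)

lemma posPart_ae_zero (g f : Lp ℝ 2 μ) (hg : ∀ᵐ x ∂μ, 0 < g x)
    (h : ⟪g, Lp.posPart f⟫ = 0) : ∀ᵐ x ∂μ, max (f x) 0 = 0 := by
  rw [l2inner_eq] at h
  have hnn : 0 ≤ᵐ[μ] fun x => g x * (Lp.posPart f) x := by
    filter_upwards [hg, Lp.coeFn_posPart f] with x h1 h2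
    rw [h2]; exact mul_nonneg h1.le (le_max_right _ _)
  have hae := (integral_eq_zero_iff_of_nonneg_ae hnn
    (l2mul_integrable g (Lp.posPart f))).mp h
  filter_upwards [hae, hg, Lp.coeFn_posPart f] with x h1 h2 h3
  have : g x * max (f x) 0 = 0 := by rw [← h3]; exact h1
  rcases mul_eq_zero.mp this with h' | h'
  · exact absurd h' (ne_of_gt h2)
  · exact h'

lemma negPart_ae_zero (g f : Lp ℝ 2 μ) (hg : ∀ᵐ x ∂μ, 0 < g x)
    (h : ⟪g, Lp.negPart f⟫ = 0) : ∀ᵐ x ∂μ, max (-f x) 0 = 0 := by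
  rw [l2inner_eq] at h
  have hnn : 0 ≤ᵐ[μ] fun x => g x * (Lp.negPart f) x := by
    filter_upwards [hg, Lp.coeFn_negPart_eq_max f] with x h1 h2
    rw [h2]; exact mul_nonneg h1.le (le_max_right _ _)
  have hae := (integral_eq_zero_iff_of_nonneg_ae hnn
    (l2mul_integrable g (Lp.negPart f))).mp h
  filter_upwards [hae, hg, Lp.coeFn_negPart_eq_max f] with x h1 h2 h3
  have : g x * max (-f x) 0 = 0 := by rw [← h3]; exact h1
  rcases mul_eq_zero.mp this with h' | h'
  · exact absurd h' (ne_of_gt h2)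
  · exact h'

lemma norm_zero_of_parts (z : Lp ℝ 2 μ) (h1 : ∀ᵐ x ∂μ, max (z x) 0 = 0)
    (h2 : ∀ᵐ x ∂μ, max (-z x) 0 = 0) : ‖z‖ = 0 := by
  have hz : ‖z‖ ^ 2 = 0 := by
    rw [l2normsq]
    rw [show (0:ℝ) = ∫ (_ : α), (0:ℝ) ∂μ by simp]
    refine integral_congr_ae ?_
    filter_upwards [h1, h2] with x a b
    have hle : z x ≤ 0 := by
      have := le_max_left (z x) (0:ℝ); rw [a] at this; exact this
    have hge : 0 ≤ z x := by
      have := le_max_left (-z x) (0:ℝ); rw [b] at this; linarith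
    have : z x = 0 := le_antisymm hle hge
    simp [this]
  nlinarith [norm_nonneg z]

lemma key_ineq (f g : Lp ℝ 2 μ) (a b t : ℝ) (ha : 0 ≤ a) (hb : 0 ≤ b) :
    a * ‖Lp.posPart (f + t • g)‖ ^ 2 + b * ‖Lp.negPart (f + t • g)‖ ^ 2 ≤
    a * ‖Lp.posPart f‖ ^ 2 + b * ‖Lp.negPart f‖ ^ 2
      + 2 * t * (a * ⟪Lp.posPart f, g⟫ - b * ⟪Lp.negPart f, g⟫)
      + (a + b) * t ^ 2 * ‖g‖ ^ 2 := by
  set F := f + t • g with hF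
  set P := Lp.posPart F
  set N := Lp.negPart F
  set p := Lp.posPart f
  set nn := Lp.negPart f
  have i1 : Integrable (fun x => a * (p x * p x)) μ := (l2mul_integrable _ _).const_mul a
  have i2 : Integrable (fun x => b * (nn x * nn x)) μ := (l2mul_integrable _ _).const_mul b
  have i3a : Integrable (fun x => a * (p x * g x)) μ := (l2mul_integrable _ _).const_mul a
  have i3b : Integrable (fun x => b * (nn x * g x)) μ := (l2mul_integrable _ _).const_mul b
  have i3 : Integrable (fun x => 2 * t * (a * (p x * g x) - b * (nn x * g x))) μ :=
    (i3a.sub i3b).const_mul (2 * t)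
  have i4 : Integrable (fun x => (a + b) * t ^ 2 * (g x * g x)) μ :=
    (l2mul_integrable _ _).const_mul _
  have iL1 : Integrable (fun x => a * (P x * P x)) μ := (l2mul_integrable _ _).const_mul a
  have iL2 : Integrable (fun x => b * (N x * N x)) μ := (l2mul_integrable _ _).const_mul b
  have hL : a * ‖P‖ ^ 2 + b * ‖N‖ ^ 2 =
      ∫ x, (a * (P x * P x) + b * (N x * N x)) ∂μ := by
    rw [integral_add iL1 iL2, integral_const_mul, integral_const_mul, l2normsq, l2normsq]
  have i12 : Integrable (fun x => a * (p x * p x) + b * (nn x * nn x)) μ := i1.add i2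
  have i123 : Integrable (fun x => a * (p x * p x) + b * (nn x * nn x)
      + 2 * t * (a * (p x * g x) - b * (nn x * g x))) μ := i12.add i3
  have i3ab : Integrable (fun x => a * (p x * g x) - b * (nn x * g x)) μ := i3a.sub i3b
  have hR : (∫ x, (a * (p x * p x) + b * (nn x * nn x)
        + 2 * t * (a * (p x * g x) - b * (nn x * g x))
        + (a + b) * t ^ 2 * (g x * g x)) ∂μ) =
      a * ‖p‖ ^ 2 + b * ‖nn‖ ^ 2
      + 2 * t * (a * ⟪p, g⟫ - b * ⟪nn, g⟫) + (a + b) * t ^ 2 * ‖g‖ ^ 2 := by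
    rw [integral_add i123 i4, integral_add i12 i3,
      integral_add i1 i2, integral_const_mul, integral_const_mul,
      integral_const_mul (2 * t), integral_sub i3a i3b, integral_const_mul,
      integral_const_mul, integral_const_mul ((a + b) * t ^ 2),
      ← l2normsq, ← l2normsq, ← l2normsq, ← l2inner_eq, ← l2inner_eq]
  rw [hL, ← hR]
  refine integral_mono_ae (iL1.add iL2) (i123.add i4) ?_
  filter_upwards [Lp.coeFn_posPart F, Lp.coeFn_negPart_eq_max F, Lp.coeFn_add f (t • g),
    Lp.coeFn_smul t g, Lp.coeFn_posPart f, Lp.coeFn_negPart_eq_max f] with x e1 e2 e3 e4 e5 e6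
  have e : (⇑f + ⇑(t • g)) x = f x + t * g x := by
    rw [Pi.add_apply, e4, Pi.smul_apply, smul_eq_mul]
  rw [e1, e2, e3, e, e5, e6]
  have k1 := sq_max_le (f x) (t * g x)
  have k2 : max (-(f x + t * g x)) 0 ^ 2 ≤ (max (-f x) 0 + -(t * g x)) ^ 2 := by
    rw [neg_add]; exact sq_max_le _ _
  nlinarith [mul_le_mul_of_nonneg_left k1 ha, mul_le_mul_of_nonneg_left k2 hb]

lemma eq_zero_of_two_mul_le (D E : ℝ) (h : ∀ t : ℝ, 2*t*D ≤ t^2*E) : D = 0 := by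
  by_contra hD
  have hE : 0 ≤ |E| := abs_nonneg E
  set τ := D / (|E|+1) with hτdef
  have hne : |E| + 1 ≠ 0 := by positivity
  have hτD : τ * (|E|+1) = D := div_mul_cancel₀ D hne
  have hτ0 : τ ≠ 0 := by
    intro h0; rw [h0, zero_mul] at hτD; exact hD hτD.symm
  have hτ2 : 0 < τ^2 := by positivity
  have h1 := h τ
  have h2 : 2*τ*D = 2*(τ^2*(|E|+1)) := by rw [← hτD]; ring
  have h3 : τ^2*E ≤ τ^2*|E| := mul_le_mul_of_nonneg_left (le_abs_self E) hτ2.le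
  nlinarith [mul_nonneg hτ2.le hE]

end Helpers

noncomputable def Jfun {Ω : Type*} [MeasurableSpace Ω] {μ : Measure Ω}
    {X₀ : Type*} [NormedAddCommGroup X₀] [InnerProductSpace ℝ X₀]
    (T : X₀ →ₗ[ℝ] Lp ℝ 2 μ) (α β : ℝ) (u : X₀) : ℝ :=
  (⟪u, u⟫ - α * ‖Lp.posPart (T u)‖ ^ 2 - β * ‖Lp.negPart (T u)‖ ^ 2) / 2


lemma lin_h8 (X Y W : ℝ) (h7 : X ≤ Y) (hW2 : 1 + Y ≤ W) : X + 1^2 ≤ W := by linarith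

lemma lin_key (Iw c1 c2 Pn Nn P' N' Pg Ng G a b t : ℝ)
    (h1 : (Iw + 2*(t*c1) + t*(t*c2) - a * P' - b * N')/2 ≤ (Iw - a * Pn - b * Nn)/2)
    (h2 : a * P' + b * N' ≤ a * Pn + b * Nn + 2*t*(a * Pg - b * Ng) + (a+b)*t^2*G)
    (hc2 : 0 ≤ c2) :
    2*t*(c1 - (a * Pg - b * Ng)) ≤ t^2*((a+b)*G) := by
  nlinarith [mul_nonneg (sq_nonneg t) hc2]

lemma lin_hδ (m' Jw' Jw P N a a' b b' A W : ℝ)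
    (h1 : m' ≤ Jw') (h2 : Jw ≤ A)
    (h3 : Jw' = Jw - ((a' - a) * P + (b' - b) * N)/2)
    (k1 : -((a' - a) * P) ≤ |a' - a| * W)
    (k2 : -((b' - b) * N) ≤ |b' - b| * W) :
    m' ≤ A + (|a' - a| + |b' - b|)/2 * W := by linarith

set_option maxHeartbeats 8000000 in
theorem stmt_11
    {n : ℕ} {s : ℝ} (hs0 : 0 < s) (hs1 : s < 1) (hns : 2 * s < (n : ℝ))
    {Ωs : Set (EuclideanSpace ℝ (Fin n))} (hΩb : Bornology.IsBounded Ωs)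
    (hΩm : MeasurableSet Ωs)
    {K : EuclideanSpace ℝ (Fin n) → ℝ} (hKpos : ∀ x, x ≠ 0 → 0 < K x)
    (hK1 : Integrable (fun x => min (‖x‖ ^ 2) 1 * K x))
    (hK2 : ∃ lam > 0, ∀ x, x ≠ 0 → lam * ‖x‖ ^ (-((n : ℝ) + 2 * s)) ≤ K x)
    (hK3 : ∀ x, K (-x) = K x)
    {X₀ : Type*} [NormedAddCommGroup X₀] [InnerProductSpace ℝ X₀] [CompleteSpace X₀]
    (T : X₀ →ₗ[ℝ] Lp ℝ 2 (volume.restrict Ωs)) (hT : Function.Injective T)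
    {lk lk1 : ℝ} (hlk0 : 0 < lk) (hlk : lk < lk1)
    (V₁ V₂ : Submodule ℝ X₀) [FiniteDimensional ℝ V₁]
    (hV₂ : ∀ v : X₀, v ∈ V₂ ↔ ∀ u ∈ V₁, ⟪u, v⟫ = 0 ∧ ⟪T u, T v⟫ = 0)
    (hcompl : IsCompl V₁ V₂)
    (hV₁b : ∀ u ∈ V₁, ⟪u, u⟫ ≤ lk * ‖T u‖ ^ 2)
    (hV₂b : ∀ v ∈ V₂, lk1 * ‖T v‖ ^ 2 ≤ ⟪v, v⟫)
    (lam1 : ℝ) (hlam1 : 0 < lam1)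
    (hPoin : ∀ u : X₀, lam1 * ‖T u‖ ^ 2 ≤ ⟪u, u⟫)
    (hlam1k : lam1 ≤ lk) (φ₁ : V₁)
    (hφ₁pos : ∀ᵐ x ∂(volume.restrict Ωs), 0 < (T (φ₁ : X₀)) x)
    (hφ₁eig : ∀ ψ : X₀, ⟪(φ₁ : X₀), ψ⟫ = lam1 * ⟪T (φ₁ : X₀), T ψ⟫)
    (φk1 : V₂) (hφk1n : ‖T (φk1 : X₀)‖ = 1)
    (hφk1e : ∀ ψ : X₀, ⟪(φk1 : X₀), ψ⟫ = lk1 * ⟪T (φk1 : X₀), T ψ⟫)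
    (hcpt : ∀ (u : ℕ → X₀) (C : ℝ), (∀ j, ‖u j‖ ≤ C) →
      ∃ (w : Lp ℝ 2 (volume.restrict Ωs)) (σ : ℕ → ℕ), StrictMono σ ∧
        Tendsto (fun j => ‖T (u (σ j)) - w‖) atTop (nhds 0))
    (M : ℝ → ℝ → V₂ → V₁)
    (hM : ∀ a b : ℝ, lk < a → a ≤ b → ∀ (v : V₂) (u : V₁),
      Jfun T a b ((u : X₀) + (v : X₀)) ≤ Jfun T a b ((M a b v : X₀) + (v : X₀)))
    (m : ℝ → ℝ → ℝ)
    (hm : ∀ a b : ℝ, lk < a → a ≤ b → m a b =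
      sInf {r : ℝ | ∃ v : V₂, ‖T (v : X₀)‖ = 1 ∧ r = Jfun T a b ((M a b v : X₀) + (v : X₀))})
    :
    (∀ p ∈ {p : ℝ × ℝ | lk < p.1 ∧ p.1 < lk1 ∧ p.1 ≤ p.2}, ∃ ε > 0, ∃ C : ℝ, 0 ≤ C ∧
      ∀ q ∈ {p : ℝ × ℝ | lk < p.1 ∧ p.1 < lk1 ∧ p.1 ≤ p.2},
      ∀ q' ∈ {p : ℝ × ℝ | lk < p.1 ∧ p.1 < lk1 ∧ p.1 ≤ p.2},
        dist q p < ε → dist q' p < ε → |m q'.1 q'.2 - m q.1 q.2| ≤ C * dist q' q) ∧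
    (∀ a₁ b₁ a₂ b₂ : ℝ, lk < a₁ → a₁ < lk1 → a₁ ≤ b₁ → lk < a₂ → a₂ < lk1 → a₂ ≤ b₂ →
      a₁ ≤ a₂ → b₁ ≤ b₂ → (a₁, b₁) ≠ (a₂, b₂) → m a₂ b₂ < m a₁ b₁) ∧
    (∀ a : ℝ, lk < a → a < lk1 → m a a = (lk1 - a) / 2 ∧ 0 < m a a) := by
  have hgnonneg : ∀ᵐ x ∂(volume.restrict Ωs), 0 ≤ (T (φ₁ : X₀)) x :=
    hφ₁pos.mono (fun x h => h.le)
  have horth : ∀ (u : V₁) (v : V₂), ⟪(u : X₀), (v : X₀)⟫ = 0 ∧ ⟪T (u : X₀), T (v : X₀)⟫ = 0 :=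
    fun u v => (hV₂ v).mp v.2 u u.2
  have hnsplit : ∀ (u : V₁) (v : V₂),
      ⟪((u:X₀) + (v:X₀)), ((u:X₀) + (v:X₀))⟫ = ⟪(u:X₀),(u:X₀)⟫ + ⟪(v:X₀),(v:X₀)⟫ := by
    intro u v
    rw [real_inner_add_add_self, (horth u v).1]; ring
  have hTsplit : ∀ (u : V₁) (v : V₂),
      ‖T ((u:X₀) + (v:X₀))‖^2 = ‖T (u:X₀)‖^2 + ‖T (v:X₀)‖^2 := by
    intro u v
    rw [← real_inner_self_eq_norm_sq, map_add, real_inner_add_add_self, (horth u v).2,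
      real_inner_self_eq_norm_sq, real_inner_self_eq_norm_sq]
    ring
  have hJdiag : ∀ (a : ℝ) (x : X₀), Jfun T a a x = (⟪x,x⟫ - a * ‖T x‖^2)/2 := by
    intro a x; unfold Jfun; rw [← posneg_sq (T x)]; ring
  have hJub : ∀ (a b : ℝ) (x : X₀), a ≤ b → Jfun T a b x ≤ (⟪x,x⟫ - a * ‖T x‖^2)/2 := by
    intro a b x hab; unfold Jfun; rw [← posneg_sq (T x)]
    nlinarith [sq_nonneg ‖Lp.negPart (T x)‖, sq_nonneg ‖Lp.posPart (T x)‖]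
  have hJlb : ∀ (a b : ℝ) (x : X₀), a ≤ b → (⟪x,x⟫ - b * ‖T x‖^2)/2 ≤ Jfun T a b x := by
    intro a b x hab; unfold Jfun; rw [← posneg_sq (T x)]
    nlinarith [sq_nonneg ‖Lp.negPart (T x)‖, sq_nonneg ‖Lp.posPart (T x)‖]
  have hJshift : ∀ (a b a' b' : ℝ) (x : X₀), Jfun T a' b' x = Jfun T a b x
      - ((a' - a) * ‖Lp.posPart (T x)‖^2 + (b' - b) * ‖Lp.negPart (T x)‖^2)/2 := by
    intro a b a' b' x; unfold Jfun; ring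
  have hJmono : ∀ (a b a' b' : ℝ) (x : X₀), a ≤ a' → b ≤ b' →
      Jfun T a' b' x ≤ Jfun T a b x := by
    intro a b a' b' x h1 h2
    rw [hJshift a b a' b' x]
    nlinarith [sq_nonneg ‖Lp.negPart (T x)‖, sq_nonneg ‖Lp.posPart (T x)‖]
  have hzerov : ∀ v : V₂, (((0:V₁) : X₀) + (v : X₀)) = (v : X₀) := by
    intro v; rw [Submodule.coe_zero, zero_add]
  have hJtv : ∀ a b, lk < a → a ≤ b → ∀ v : V₂,
      Jfun T a b (v : X₀) ≤ Jfun T a b ((M a b v : X₀) + (v : X₀)) := by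
    intro a b ha hab v
    have h := hM a b ha hab v 0
    rwa [hzerov] at h
  have hVvlb : ∀ v : V₂, lk1 * ‖T (v:X₀)‖^2 ≤ ⟪(v:X₀),(v:X₀)⟫ := fun v => hV₂b v v.2
  have hJtlb : ∀ a b, lk < a → a ≤ b → ∀ v : V₂, ‖T (v:X₀)‖ = 1 →
      (lk1 - b)/2 ≤ Jfun T a b ((M a b v : X₀) + (v : X₀)) ∧
      (⟪(v:X₀),(v:X₀)⟫ - b)/2 ≤ Jfun T a b ((M a b v : X₀) + (v : X₀)) := by
    intro a b ha hab v hv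
    have h1 := hJlb a b (v:X₀) hab
    have h2 := hJtv a b ha hab v
    have h3 := hVvlb v
    rw [hv] at h1 h3
    constructor <;> nlinarith
  have hMb : ∀ a b, lk < a → a ≤ b → ∀ v : V₂, ‖T (v:X₀)‖ = 1 →
      (a - lk) * ‖T ((M a b v : V₁) : X₀)‖^2 ≤ b - a ∧
      ⟪((M a b v : V₁):X₀), ((M a b v:V₁):X₀)⟫ ≤ lk * ((b - a)/(a - lk)) := by
    intro a b ha hab v hv
    have h1 := hJtv a b ha hab v
    have h2 := hJub a b (((M a b v : V₁):X₀) + (v:X₀)) hab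
    have h3 := hJlb a b (v:X₀) hab
    have h4 := hnsplit (M a b v) v
    have h5 := hTsplit (M a b v) v
    have h6 := hV₁b (M a b v : X₀) (M a b v).2
    have h7 := hVvlb v
    rw [hv] at h5 h3 h7
    have key : (a - lk) * ‖T ((M a b v : V₁) : X₀)‖^2 ≤ b - a := by nlinarith
    refine ⟨key, ?_⟩
    have h8 : ‖T ((M a b v : V₁) : X₀)‖^2 ≤ (b-a)/(a-lk) := by
      rw [le_div_iff₀ (by linarith : (0:ℝ) < a - lk)]
      linarith
    nlinarith
  have hbddS : ∀ a b, lk < a → a ≤ b → ∀ r ∈ {r : ℝ | ∃ v : V₂, ‖T (v : X₀)‖ = 1 ∧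
      r = Jfun T a b ((M a b v : X₀) + (v : X₀))}, (lk1 - b)/2 ≤ r := by
    rintro a b ha hab r ⟨v, hv, rfl⟩
    exact (hJtlb a b ha hab v hv).1
  have hSne : ∀ a b, {r : ℝ | ∃ v : V₂, ‖T (v : X₀)‖ = 1 ∧
      r = Jfun T a b ((M a b v : X₀) + (v : X₀))}.Nonempty :=
    fun a b => ⟨Jfun T a b ((M a b φk1 : X₀) + (φk1 : X₀)), φk1, hφk1n, rfl⟩
  have hmle : ∀ a b, lk < a → a ≤ b → ∀ v : V₂, ‖T (v:X₀)‖ = 1 →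
      m a b ≤ Jfun T a b ((M a b v : X₀) + (v : X₀)) := by
    intro a b ha hab v hv
    rw [hm a b ha hab]
    exact csInf_le ⟨(lk1 - b)/2, fun r hr => hbddS a b ha hab r hr⟩ ⟨v, hv, rfl⟩
  have hmlb : ∀ a b, lk < a → a ≤ b → (lk1 - b)/2 ≤ m a b := by
    intro a b ha hab
    rw [hm a b ha hab]
    exact le_csInf (hSne a b) (hbddS a b ha hab)
  have hφk1self : ⟪(φk1:X₀),(φk1:X₀)⟫ = lk1 := by
    have h2 : ⟪T (φk1:X₀), T (φk1:X₀)⟫ = 1 := by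
      rw [real_inner_self_eq_norm_sq, hφk1n]; norm_num
    have h := hφk1e (φk1:X₀)
    rw [h2, mul_one] at h
    exact h
  refine ⟨?_, ?_, ?_⟩
  · -- Lipschitz
    rintro p ⟨hp1, hp2, hp3⟩
    have hdpos : (0:ℝ) < (p.1 - lk)/2 := by linarith
    set d : ℝ := (p.1 - lk)/2 with hd
    have hWnum : 0 < p.2 + 1 - lk := by linarith
    set W : ℝ := 1 + (p.2 + 1 - lk)/d with hW
    have hW0 : 0 ≤ W := by positivity
    have hmdiff : ∀ a b a' b', lk < a → a ≤ b → lk < a' → a' ≤ b' →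
        1 + (b' - a')/(a' - lk) ≤ W →
        m a' b' ≤ m a b + (|a' - a| + |b' - b|)/2 * W := by
      intro a b a' b' ha hab ha' hab' hW2
      have hδ : ∀ v : V₂, ‖T (v:X₀)‖ = 1 →
          m a' b' ≤ Jfun T a b ((M a b v : X₀) + (v:X₀)) + (|a' - a| + |b' - b|)/2 * W := by
        intro v hv
        have h1 := hmle a' b' ha' hab' v hv
        have h2 := hM a b ha hab v (M a' b' v)
        have h3 := hJshift a b a' b' ((M a' b' v : X₀) + (v:X₀))
        have h4 := posneg_sq (T ((M a' b' v : X₀) + (v:X₀)))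
        have h5 := hTsplit (M a' b' v) v
        rw [hv] at h5
        have h6 := (hMb a' b' ha' hab' v hv).1
        have h7 : ‖T ((M a' b' v : V₁):X₀)‖^2 ≤ (b' - a')/(a' - lk) := by
          rw [le_div_iff₀ (by linarith : (0:ℝ) < a' - lk)]; linarith
        have h8 : ‖T ((M a' b' v : X₀) + (v:X₀))‖^2 ≤ W := by
          rw [h5]; exact lin_h8 _ _ _ h7 hW2
        have hP0 : (0:ℝ) ≤ ‖Lp.posPart (T ((M a' b' v : X₀) + (v:X₀)))‖^2 := sq_nonneg _
        have hN0 : (0:ℝ) ≤ ‖Lp.negPart (T ((M a' b' v : X₀) + (v:X₀)))‖^2 := sq_nonneg _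
        have hPle : ‖Lp.posPart (T ((M a' b' v : X₀) + (v:X₀)))‖^2 ≤ W := by linarith
        have hNle : ‖Lp.negPart (T ((M a' b' v : X₀) + (v:X₀)))‖^2 ≤ W := by linarith
        have k1 : -((a' - a) * ‖Lp.posPart (T ((M a' b' v : X₀) + (v:X₀)))‖^2) ≤ |a' - a| * W := by
          nlinarith [abs_nonneg (a' - a), neg_abs_le (a' - a)]
        have k2 : -((b' - b) * ‖Lp.negPart (T ((M a' b' v : X₀) + (v:X₀)))‖^2) ≤ |b' - b| * W := by
          nlinarith [abs_nonneg (b' - b), neg_abs_le (b' - b)]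
        exact lin_hδ _ _ _ _ _ _ _ _ _ _ _ h1 h2 h3 k1 k2
      rw [hm a b ha hab]
      have h9 : m a' b' - (|a' - a| + |b' - b|)/2 * W ≤
          sInf {r : ℝ | ∃ v : V₂, ‖T (v : X₀)‖ = 1 ∧
            r = Jfun T a b ((M a b v : X₀) + (v : X₀))} := by
        refine le_csInf (hSne a b) ?_
        rintro r ⟨v, hv, rfl⟩
        linarith [hδ v hv]
      linarith
    refine ⟨min d 1, by positivity, W, hW0, ?_⟩
    rintro q ⟨hq1, hq2, hq3⟩ q' ⟨hq'1, hq'2, hq'3⟩ hqp hq'p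
    have hfst : ∀ r t : ℝ × ℝ, |r.1 - t.1| ≤ dist r t ∧ |r.2 - t.2| ≤ dist r t := by
      intro r t
      rw [Prod.dist_eq, Real.dist_eq, Real.dist_eq]
      exact ⟨le_max_left _ _, le_max_right _ _⟩
    have hq1d : |q.1 - p.1| < d := lt_of_le_of_lt (hfst q p).1 (lt_of_lt_of_le hqp (min_le_left _ _))
    have hq2d : |q.2 - p.2| < 1 := lt_of_le_of_lt (hfst q p).2 (lt_of_lt_of_le hqp (min_le_right _ _))
    have hq'1d : |q'.1 - p.1| < d := lt_of_le_of_lt (hfst q' p).1 (lt_of_lt_of_le hq'p (min_le_left _ _))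
    have hq'2d : |q'.2 - p.2| < 1 := lt_of_le_of_lt (hfst q' p).2 (lt_of_lt_of_le hq'p (min_le_right _ _))
    rw [abs_lt] at hq1d hq2d hq'1d hq'2d
    have hWq : 1 + (q.2 - q.1)/(q.1 - lk) ≤ W := by
      have : (q.2 - q.1)/(q.1 - lk) ≤ (p.2 + 1 - lk)/d := by
        apply div_le_div₀ hWnum.le (by linarith) hdpos
        simp only [hd]; linarith
      linarith
    have hWq' : 1 + (q'.2 - q'.1)/(q'.1 - lk) ≤ W := by
      have : (q'.2 - q'.1)/(q'.1 - lk) ≤ (p.2 + 1 - lk)/d := by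
        apply div_le_div₀ hWnum.le (by linarith) hdpos
        simp only [hd]; linarith
      linarith
    have m1 := hmdiff q.1 q.2 q'.1 q'.2 hq1 hq3 hq'1 hq'3 hWq'
    have m2 := hmdiff q'.1 q'.2 q.1 q.2 hq'1 hq'3 hq1 hq3 hWq
    have habs : (|q'.1 - q.1| + |q'.2 - q.2|)/2 * W ≤ W * dist q' q := by
      have d1 := (hfst q' q).1
      have d2 := (hfst q' q).2
      have : (|q'.1 - q.1| + |q'.2 - q.2|)/2 ≤ dist q' q := by linarith
      calc (|q'.1 - q.1| + |q'.2 - q.2|)/2 * W ≤ dist q' q * W :=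
        mul_le_mul_of_nonneg_right this hW0
      _ = W * dist q' q := mul_comm _ _
    rw [abs_sub_le_iff]
    constructor
    · calc m q'.1 q'.2 - m q.1 q.2 ≤ (|q'.1 - q.1| + |q'.2 - q.2|)/2 * W := by linarith
      _ ≤ W * dist q' q := habs
    · have e1 : |q.1 - q'.1| = |q'.1 - q.1| := abs_sub_comm _ _
      have e2 : |q.2 - q'.2| = |q'.2 - q.2| := abs_sub_comm _ _
      calc m q.1 q.2 - m q'.1 q'.2 ≤ (|q.1 - q'.1| + |q.2 - q'.2|)/2 * W := by linarith
      _ = (|q'.1 - q.1| + |q'.2 - q.2|)/2 * W := by rw [e1, e2]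
      _ ≤ W * dist q' q := habs
  · -- strict monotonicity
    intro a₁ b₁ a₂ b₂ ha₁ ha₁' hab₁ ha₂ ha₂' hab₂ h12a h12b hne
    have ha₂lam : 0 < a₂ - lam1 := by linarith
    have hb₂lam : 0 < b₂ - lam1 := by linarith
    -- first-order condition
    have hfo : ∀ v : V₂,
        (a₂ - lam1) * ⟪T (φ₁:X₀), Lp.posPart (T ((M a₂ b₂ v : X₀) + (v:X₀)))⟫
          = (b₂ - lam1) * ⟪T (φ₁:X₀), Lp.negPart (T ((M a₂ b₂ v : X₀) + (v:X₀)))⟫ := by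
      intro v
      have ha0 : (0:ℝ) ≤ a₂ := by linarith
      have hb0 : (0:ℝ) ≤ b₂ := by linarith
      have key : ∀ t : ℝ, 2*t*(⟪(M a₂ b₂ v : X₀) + (v:X₀), (φ₁:X₀)⟫
          - (a₂ * ⟪Lp.posPart (T ((M a₂ b₂ v : X₀) + (v:X₀))), T (φ₁:X₀)⟫
            - b₂ * ⟪Lp.negPart (T ((M a₂ b₂ v : X₀) + (v:X₀))), T (φ₁:X₀)⟫))
          ≤ t^2 * ((a₂+b₂) * ‖T (φ₁:X₀)‖^2) := by
        intro t
        have h1 := hM a₂ b₂ ha₂ hab₂ v (M a₂ b₂ v + t • φ₁)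
        have hco : ((M a₂ b₂ v + t • φ₁ : V₁) : X₀) + (v:X₀)
            = ((M a₂ b₂ v : X₀) + (v:X₀)) + t • (φ₁:X₀) := by
          rw [Submodule.coe_add, Submodule.coe_smul, add_right_comm]
        rw [hco] at h1
        unfold Jfun at h1
        rw [map_add, LinearMap.map_smul] at h1
        have h3 : ⟪((M a₂ b₂ v : X₀) + (v:X₀)) + t • (φ₁:X₀),
              ((M a₂ b₂ v : X₀) + (v:X₀)) + t • (φ₁:X₀)⟫
            = ⟪(M a₂ b₂ v : X₀) + (v:X₀), (M a₂ b₂ v : X₀) + (v:X₀)⟫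
              + 2*(t*⟪(M a₂ b₂ v : X₀) + (v:X₀), (φ₁:X₀)⟫)
              + t*(t*⟪(φ₁:X₀),(φ₁:X₀)⟫) := by
          rw [real_inner_add_add_self, real_inner_smul_right, real_inner_smul_left,
            real_inner_smul_right]
        rw [h3] at h1
        have h2 := key_ineq (T ((M a₂ b₂ v : X₀) + (v:X₀))) (T (φ₁:X₀)) a₂ b₂ t ha0 hb0
        exact lin_key _ _ _ _ _ _ _ _ _ _ _ _ _ h1 h2 real_inner_self_nonneg
      have hD := eq_zero_of_two_mul_le _ _ key
      have hw := hφ₁eig ((M a₂ b₂ v : X₀) + (v:X₀))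
      have hcm : ⟪(M a₂ b₂ v : X₀) + (v:X₀), (φ₁:X₀)⟫
          = ⟪(φ₁:X₀), (M a₂ b₂ v : X₀) + (v:X₀)⟫ := real_inner_comm _ _
      have hps := pos_sub_neg (T (φ₁:X₀)) (T ((M a₂ b₂ v : X₀) + (v:X₀)))
      have hc1 : ⟪Lp.posPart (T ((M a₂ b₂ v : X₀) + (v:X₀))), T (φ₁:X₀)⟫
          = ⟪T (φ₁:X₀), Lp.posPart (T ((M a₂ b₂ v : X₀) + (v:X₀)))⟫ := real_inner_comm _ _
      have hc2 : ⟪Lp.negPart (T ((M a₂ b₂ v : X₀) + (v:X₀))), T (φ₁:X₀)⟫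
          = ⟪T (φ₁:X₀), Lp.negPart (T ((M a₂ b₂ v : X₀) + (v:X₀)))⟫ := real_inner_comm _ _
      rw [hcm, hw, ← hps, hc1, hc2] at hD
      linarith
    -- the uniform positivity claim
    have hγex : ∃ γ > 0, ∀ v : V₂, ‖T (v:X₀)‖ = 1 →
        ⟪(v:X₀),(v:X₀)⟫ ≤ max (2*(m a₁ b₁ + 1) + b₂) lk1 →
        γ ≤ ⟪T (φ₁:X₀), Lp.posPart (T ((M a₂ b₂ v : X₀) + (v:X₀)))⟫ := by
      by_contra hcon
      push_neg at hcon
      choose vv hv1 hv2 hv3 using fun j : ℕ => hcon (1/((j:ℝ)+1)) (by positivity)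
      have hBb : ∀ j, ‖(M a₂ b₂ (vv j) : X₀) + ((vv j):X₀)‖ ≤
          Real.sqrt (lk * ((b₂-a₂)/(a₂-lk))) + Real.sqrt (max (2*(m a₁ b₁ + 1) + b₂) lk1) := by
        intro j
        have h1 := (hMb a₂ b₂ ha₂ hab₂ (vv j) (hv1 j)).2
        have h2 := hv2 j
        have e1 : ‖(M a₂ b₂ (vv j) : X₀)‖ ≤ Real.sqrt (lk * ((b₂-a₂)/(a₂-lk))) := by
          rw [← Real.sqrt_sq (norm_nonneg ((M a₂ b₂ (vv j) : X₀)))]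
          apply Real.sqrt_le_sqrt
          rw [← real_inner_self_eq_norm_sq]; exact h1
        have e2 : ‖((vv j):X₀)‖ ≤ Real.sqrt (max (2*(m a₁ b₁ + 1) + b₂) lk1) := by
          rw [← Real.sqrt_sq (norm_nonneg (((vv j):X₀)))]
          apply Real.sqrt_le_sqrt
          rw [← real_inner_self_eq_norm_sq]; exact h2
        exact le_trans (norm_add_le _ _) (add_le_add e1 e2)
      obtain ⟨z, σ, hσ, hconv⟩ :=
        hcpt (fun j => (M a₂ b₂ (vv j) : X₀) + ((vv j):X₀)) _ hBb
      have l0 : Tendsto (fun j => 1/((σ j:ℝ)+1)) atTop (nhds 0) :=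
        tendsto_one_div_add_atTop_nhds_zero_nat.comp hσ.tendsto_atTop
      have l2 : Tendsto (fun j => ‖T (φ₁:X₀)‖ *
          ‖T ((M a₂ b₂ (vv (σ j)) : X₀) + ((vv (σ j)):X₀)) - z‖) atTop (nhds 0) := by
        simpa using hconv.const_mul ‖T (φ₁:X₀)‖
      have dd : ∀ j, ⟪T (φ₁:X₀), Lp.posPart z⟫
          - ⟪T (φ₁:X₀), Lp.posPart (T ((M a₂ b₂ (vv (σ j)) : X₀) + ((vv (σ j)):X₀)))⟫
          ≤ ‖T (φ₁:X₀)‖ * ‖T ((M a₂ b₂ (vv (σ j)) : X₀) + ((vv (σ j)):X₀)) - z‖ := by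
        intro j
        rw [← inner_sub_right]
        calc ⟪T (φ₁:X₀), Lp.posPart z -
            Lp.posPart (T ((M a₂ b₂ (vv (σ j)) : X₀) + ((vv (σ j)):X₀)))⟫
            ≤ ‖T (φ₁:X₀)‖ * ‖Lp.posPart z -
              Lp.posPart (T ((M a₂ b₂ (vv (σ j)) : X₀) + ((vv (σ j)):X₀)))‖ :=
          real_inner_le_norm _ _
        _ ≤ ‖T (φ₁:X₀)‖ * ‖z - T ((M a₂ b₂ (vv (σ j)) : X₀) + ((vv (σ j)):X₀))‖ :=
          mul_le_mul_of_nonneg_left (posPart_sub_norm _ _) (norm_nonneg _)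
        _ = ‖T (φ₁:X₀)‖ * ‖T ((M a₂ b₂ (vv (σ j)) : X₀) + ((vv (σ j)):X₀)) - z‖ := by
          rw [norm_sub_rev]
      have ddn : ∀ j, ⟪T (φ₁:X₀), Lp.negPart z⟫
          - ⟪T (φ₁:X₀), Lp.negPart (T ((M a₂ b₂ (vv (σ j)) : X₀) + ((vv (σ j)):X₀)))⟫
          ≤ ‖T (φ₁:X₀)‖ * ‖T ((M a₂ b₂ (vv (σ j)) : X₀) + ((vv (σ j)):X₀)) - z‖ := by
        intro j
        rw [← inner_sub_right]
        calc ⟪T (φ₁:X₀), Lp.negPart z -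
            Lp.negPart (T ((M a₂ b₂ (vv (σ j)) : X₀) + ((vv (σ j)):X₀)))⟫
            ≤ ‖T (φ₁:X₀)‖ * ‖Lp.negPart z -
              Lp.negPart (T ((M a₂ b₂ (vv (σ j)) : X₀) + ((vv (σ j)):X₀)))‖ :=
          real_inner_le_norm _ _
        _ ≤ ‖T (φ₁:X₀)‖ * ‖z - T ((M a₂ b₂ (vv (σ j)) : X₀) + ((vv (σ j)):X₀))‖ :=
          mul_le_mul_of_nonneg_left (negPart_sub_norm _ _) (norm_nonneg _)
        _ = ‖T (φ₁:X₀)‖ * ‖T ((M a₂ b₂ (vv (σ j)) : X₀) + ((vv (σ j)):X₀)) - z‖ := by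
          rw [norm_sub_rev]
      have hzP : ⟪T (φ₁:X₀), Lp.posPart z⟫ = 0 := by
        refine le_antisymm ?_ (inner_posPart_nonneg _ z hgnonneg)
        have hle : ∀ j, ⟪T (φ₁:X₀), Lp.posPart z⟫ ≤ 1/((σ j:ℝ)+1)
            + ‖T (φ₁:X₀)‖ * ‖T ((M a₂ b₂ (vv (σ j)) : X₀) + ((vv (σ j)):X₀)) - z‖ := by
          intro j
          linarith [dd j, hv3 (σ j)]
        have hlim : Tendsto (fun j => 1/((σ j:ℝ)+1)
            + ‖T (φ₁:X₀)‖ * ‖T ((M a₂ b₂ (vv (σ j)) : X₀) + ((vv (σ j)):X₀)) - z‖)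
            atTop (nhds 0) := by simpa using l0.add l2
        exact ge_of_tendsto' hlim hle
      have hzN : ⟪T (φ₁:X₀), Lp.negPart z⟫ = 0 := by
        refine le_antisymm ?_ (inner_negPart_nonneg _ z hgnonneg)
        have hNlt : ∀ j, (b₂ - lam1) * ⟪T (φ₁:X₀),
            Lp.negPart (T ((M a₂ b₂ (vv j) : X₀) + ((vv j):X₀)))⟫
            < (a₂ - lam1) * (1/((j:ℝ)+1)) := by
          intro j
          have e := hfo (vv j)
          nlinarith [mul_lt_mul_of_pos_left (hv3 j) ha₂lam]
        have hle : ∀ j, (b₂ - lam1) * ⟪T (φ₁:X₀), Lp.negPart z⟫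
            ≤ (a₂ - lam1) * (1/((σ j:ℝ)+1)) + (b₂ - lam1) *
            (‖T (φ₁:X₀)‖ * ‖T ((M a₂ b₂ (vv (σ j)) : X₀) + ((vv (σ j)):X₀)) - z‖) := by
          intro j
          have := mul_le_mul_of_nonneg_left (ddn j) hb₂lam.le
          have h2 := hNlt (σ j)
          nlinarith
        have hlim : Tendsto (fun j => (a₂ - lam1) * (1/((σ j:ℝ)+1)) + (b₂ - lam1) *
            (‖T (φ₁:X₀)‖ * ‖T ((M a₂ b₂ (vv (σ j)) : X₀) + ((vv (σ j)):X₀)) - z‖))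
            atTop (nhds 0) := by
          simpa using (l0.const_mul (a₂ - lam1)).add (l2.const_mul (b₂ - lam1))
        have hfin := ge_of_tendsto' hlim hle
        nlinarith [inner_negPart_nonneg (T (φ₁:X₀)) z hgnonneg]
      have hz1 := posPart_ae_zero _ z hφ₁pos hzP
      have hz2 := negPart_ae_zero _ z hφ₁pos hzN
      have hz0 : ‖z‖ = 0 := norm_zero_of_parts z hz1 hz2
      have hge1 : ∀ j, 1 ≤ ‖T ((M a₂ b₂ (vv j) : X₀) + ((vv j):X₀))‖ := by
        intro j
        have h5 := hTsplit (M a₂ b₂ (vv j)) (vv j)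
        rw [hv1 j] at h5
        nlinarith [sq_nonneg ‖T ((M a₂ b₂ (vv j) : X₀))‖,
          norm_nonneg (T ((M a₂ b₂ (vv j) : X₀) + ((vv j):X₀)))]
      obtain ⟨j, hj⟩ := (hconv.eventually_lt_const (by norm_num : (0:ℝ) < 1/2)).exists
      have htri : ‖T ((M a₂ b₂ (vv (σ j)) : X₀) + ((vv (σ j)):X₀))‖
          ≤ ‖T ((M a₂ b₂ (vv (σ j)) : X₀) + ((vv (σ j)):X₀)) - z‖ + ‖z‖ := by
        have h := norm_add_le (T ((M a₂ b₂ (vv (σ j)) : X₀) + ((vv (σ j)):X₀)) - z) z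
        rwa [sub_add_cancel] at h
      rw [hz0] at htri
      linarith [hge1 (σ j)]
    obtain ⟨γ, hγ0, hγ⟩ := hγex
    -- ‖g‖ > 0
    have hgn : 0 < ‖T (φ₁:X₀)‖ := by
      have h := hγ φk1 hφk1n (by rw [hφk1self]; exact le_max_right _ _)
      have h2 := real_inner_le_norm (T (φ₁:X₀))
        (Lp.posPart (T ((M a₂ b₂ φk1 : X₀) + (φk1:X₀))))
      rcases (norm_nonneg (T (φ₁:X₀))).lt_or_eq with hlt | heq
      · exact hlt
      · exfalso
        rw [← heq, zero_mul] at h2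
        linarith
    have hane : a₁ < a₂ ∨ b₁ < b₂ := by
      rcases h12a.lt_or_eq with h | h
      · exact Or.inl h
      · rcases h12b.lt_or_eq with h' | h'
        · exact Or.inr h'
        · exact absurd (by rw [h, h']) hne
    have hcP : 0 < γ / ‖T (φ₁:X₀)‖ := div_pos hγ0 hgn
    have hcN : 0 < ((a₂ - lam1)/(b₂ - lam1)) * γ / ‖T (φ₁:X₀)‖ := by positivity
    have hκ0 : 0 < ((a₂-a₁)*(γ / ‖T (φ₁:X₀)‖)^2
        + (b₂-b₁)*(((a₂ - lam1)/(b₂ - lam1)) * γ / ‖T (φ₁:X₀)‖)^2)/2 := by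
      rcases hane with h | h
      · have t1 : 0 < (a₂-a₁)*(γ / ‖T (φ₁:X₀)‖)^2 :=
          mul_pos (by linarith) (by positivity)
        have t2 : 0 ≤ (b₂-b₁)*(((a₂ - lam1)/(b₂ - lam1)) * γ / ‖T (φ₁:X₀)‖)^2 :=
          mul_nonneg (by linarith) (by positivity)
        linarith
      · have t1 : 0 ≤ (a₂-a₁)*(γ / ‖T (φ₁:X₀)‖)^2 :=
          mul_nonneg (by linarith) (by positivity)
        have t2 : 0 < (b₂-b₁)*(((a₂ - lam1)/(b₂ - lam1)) * γ / ‖T (φ₁:X₀)‖)^2 :=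
          mul_pos (by linarith) (by positivity)
        linarith
    set κ : ℝ := ((a₂-a₁)*(γ / ‖T (φ₁:X₀)‖)^2
        + (b₂-b₁)*(((a₂ - lam1)/(b₂ - lam1)) * γ / ‖T (φ₁:X₀)‖)^2)/2 with hκ
    have hε0 : 0 < min 1 κ / 2 := by
      have := lt_min one_pos hκ0
      linarith
    have hslt : sInf {r : ℝ | ∃ v : V₂, ‖T (v : X₀)‖ = 1 ∧
        r = Jfun T a₁ b₁ ((M a₁ b₁ v : X₀) + (v : X₀))} < m a₁ b₁ + min 1 κ / 2 := by
      rw [← hm a₁ b₁ ha₁ hab₁]; linarith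
    obtain ⟨r, hrS, hrlt⟩ := exists_lt_of_csInf_lt (hSne a₁ b₁) hslt
    obtain ⟨v, hv, rfl⟩ := hrS
    -- v is admissible for the γ bound
    have hvR : ⟪(v:X₀),(v:X₀)⟫ ≤ max (2*(m a₁ b₁ + 1) + b₂) lk1 := by
      have c1 := (hJtlb a₂ b₂ ha₂ hab₂ v hv).2
      have c2 : Jfun T a₂ b₂ ((M a₂ b₂ v : X₀) + (v:X₀))
          ≤ Jfun T a₁ b₁ ((M a₂ b₂ v : X₀) + (v:X₀)) :=
        hJmono a₁ b₁ a₂ b₂ _ h12a h12b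
      have c3 : Jfun T a₁ b₁ ((M a₂ b₂ v : X₀) + (v:X₀))
          ≤ Jfun T a₁ b₁ ((M a₁ b₁ v : X₀) + (v:X₀)) := hM a₁ b₁ ha₁ hab₁ v (M a₂ b₂ v)
      have c4 : min 1 κ / 2 ≤ 1 := by
        have := min_le_left 1 κ
        have := hκ0
        linarith [lt_min one_pos hκ0]
      have := le_max_left (2*(m a₁ b₁ + 1) + b₂) lk1
      linarith
    have hPv := hγ v hv hvR
    have hNv : ((a₂ - lam1)/(b₂ - lam1)) * γ
        ≤ ⟪T (φ₁:X₀), Lp.negPart (T ((M a₂ b₂ v : X₀) + (v:X₀)))⟫ := by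
      have e := hfo v
      rw [div_mul_eq_mul_div, div_le_iff₀ hb₂lam]
      nlinarith [mul_le_mul_of_nonneg_left hPv ha₂lam.le]
    have hwP : γ / ‖T (φ₁:X₀)‖ ≤ ‖Lp.posPart (T ((M a₂ b₂ v : X₀) + (v:X₀)))‖ := by
      have h2 := real_inner_le_norm (T (φ₁:X₀))
        (Lp.posPart (T ((M a₂ b₂ v : X₀) + (v:X₀))))
      rw [div_le_iff₀ hgn]
      nlinarith
    have hwN : ((a₂ - lam1)/(b₂ - lam1)) * γ / ‖T (φ₁:X₀)‖
        ≤ ‖Lp.negPart (T ((M a₂ b₂ v : X₀) + (v:X₀)))‖ := by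
      have h2 := real_inner_le_norm (T (φ₁:X₀))
        (Lp.negPart (T ((M a₂ b₂ v : X₀) + (v:X₀))))
      rw [div_le_iff₀ hgn]
      nlinarith
    have hwP2 : (γ / ‖T (φ₁:X₀)‖)^2
        ≤ ‖Lp.posPart (T ((M a₂ b₂ v : X₀) + (v:X₀)))‖^2 :=
      pow_le_pow_left₀ hcP.le hwP 2
    have hwN2 : (((a₂ - lam1)/(b₂ - lam1)) * γ / ‖T (φ₁:X₀)‖)^2
        ≤ ‖Lp.negPart (T ((M a₂ b₂ v : X₀) + (v:X₀)))‖^2 :=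
      pow_le_pow_left₀ hcN.le hwN 2
    have s1 : m a₂ b₂ ≤ Jfun T a₂ b₂ ((M a₂ b₂ v : X₀) + (v:X₀)) := hmle a₂ b₂ ha₂ hab₂ v hv
    have s2 := hJshift a₁ b₁ a₂ b₂ ((M a₂ b₂ v : X₀) + (v:X₀))
    have s3 : Jfun T a₁ b₁ ((M a₂ b₂ v : X₀) + (v:X₀))
        ≤ Jfun T a₁ b₁ ((M a₁ b₁ v : X₀) + (v:X₀)) := hM a₁ b₁ ha₁ hab₁ v (M a₂ b₂ v)
    have s4 : (a₂-a₁)*(γ / ‖T (φ₁:X₀)‖)^2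
        ≤ (a₂-a₁)*‖Lp.posPart (T ((M a₂ b₂ v : X₀) + (v:X₀)))‖^2 :=
      mul_le_mul_of_nonneg_left hwP2 (by linarith)
    have s5 : (b₂-b₁)*(((a₂ - lam1)/(b₂ - lam1)) * γ / ‖T (φ₁:X₀)‖)^2
        ≤ (b₂-b₁)*‖Lp.negPart (T ((M a₂ b₂ v : X₀) + (v:X₀)))‖^2 :=
      mul_le_mul_of_nonneg_left hwN2 (by linarith)
    have hεκ : min 1 κ / 2 ≤ κ/2 := by linarith [min_le_right 1 κ]
    rw [hκ] at hεκ hε0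
    linarith
  · -- diagonal
    intro a ha ha'
    have hmaa : m a a = (lk1 - a)/2 := by
      rw [hm a a ha le_rfl]
      refine IsLeast.csInf_eq ⟨⟨φk1, hφk1n, ?_⟩, fun r hr => hbddS a a ha le_rfl r hr⟩
      have hub : Jfun T a a ((M a a φk1 : X₀) + (φk1 : X₀)) ≤ (lk1 - a)/2 := by
        rw [hJdiag, hnsplit (M a a φk1) φk1, hTsplit (M a a φk1) φk1, hφk1n, hφk1self]
        have h6 := hV₁b (M a a φk1 : X₀) (M a a φk1).2
        nlinarith [sq_nonneg ‖T ((M a a φk1 : V₁) : X₀)‖]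
      have hlb : (lk1 - a)/2 ≤ Jfun T a a ((M a a φk1 : X₀) + (φk1 : X₀)) :=
        (hJtlb a a ha le_rfl φk1 hφk1n).1
      linarith
    exact ⟨hmaa, by rw [hmaa]; linarith⟩
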